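/- If adding a set A* of at most k(k-1)/2 edges to a graph increases the degree of at least k distinct vertices by at least k-1 each, then |A*| = k(k-1)/2 and those k vertices together with the edges of A* form a complete graph on k vertices. -/

import Mathlib

/-- If adding a set `A*` of at most `k(k-1)/2` new edges (a graph `A` edge-disjoint from
`G`) increases the degree of at least `k` distinct vertices by at least `k - 1` each,
then `|A*| = k(k-1)/2` and those `k` vertices together with the edges of `A*` form a
complete graph on `k` vertices. -/
theorem added_edges_form_clique {V : Type*} [Fintype V] (G A : SimpleGraph V)
    (hdisj : Disjoint G A) (k : ℕ) (hA : A.edgeSet.ncard ≤ k * (k - 1) / 2)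
    (s : Finset V) (hs : s.card = k)
    (hinc : ∀ v ∈ s,
      (G.neighborSet v).ncard + (k - 1) ≤ ((G ⊔ A).neighborSet v).ncard) :
    A.edgeSet.ncard = k * (k - 1) / 2 ∧
      ∀ v w : V, A.Adj v w ↔ (v ∈ s ∧ w ∈ s ∧ v ≠ w) := by
  classical
  -- degree bound for vertices in s
  have hbot : G ⊓ A = ⊥ := disjoint_iff.mp hdisj
  have hnadj : ∀ v w : V, ¬ (G.Adj v w ∧ A.Adj v w) := by
    intro v w h
    have : (G ⊓ A).Adj v w := h
    rw [hbot] at this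
    exact this
  have hdeg : ∀ v ∈ s, k - 1 ≤ A.degree v := by
    intro v hv
    have hsplit : ((G ⊔ A).neighborSet v) = G.neighborSet v ∪ A.neighborSet v := by
      ext w; simp [SimpleGraph.mem_neighborSet, SimpleGraph.sup_adj]
    have hdis : Disjoint (G.neighborSet v) (A.neighborSet v) := by
      rw [Set.disjoint_left]
      intro w hw hw'
      exact hnadj v w ⟨hw, hw'⟩
    have hcard : ((G ⊔ A).neighborSet v).ncard
        = (G.neighborSet v).ncard + (A.neighborSet v).ncard := by
      rw [hsplit, Set.ncard_union_eq hdis (Set.toFinite _) (Set.toFinite _)]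
    have := hinc v hv
    rw [hcard] at this
    have h2 : k - 1 ≤ (A.neighborSet v).ncard := by omega
    rwa [Set.ncard_eq_toFinset_card', Set.toFinset_card,
      SimpleGraph.card_neighborSet_eq_degree] at h2
  -- sum of degrees
  have hsum : ∑ v, A.degree v = 2 * A.edgeFinset.card :=
    SimpleGraph.sum_degrees_eq_twice_card_edges A
  have hncard : A.edgeSet.ncard = A.edgeFinset.card := by
    rw [Set.ncard_eq_toFinset_card']
    convert rfl
    ext e; simp
  have heven : 2 ∣ k * (k - 1) := by
    rcases Nat.even_or_odd k with h | h
    · exact Dvd.dvd.mul_right h.two_dvd _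
    · rcases h with ⟨m, hm⟩
      subst hm
      exact Dvd.dvd.mul_left ⟨m, by omega⟩ _
  have hub : 2 * A.edgeFinset.card ≤ k * (k - 1) := by
    calc 2 * A.edgeFinset.card ≤ 2 * (k * (k - 1) / 2) := by
          rw [← hncard]; omega
      _ = k * (k - 1) := Nat.two_mul_div_two_of_even (even_iff_two_dvd.mpr heven)
  have hlbs : k * (k - 1) ≤ ∑ v ∈ s, A.degree v := by
    calc k * (k - 1) = ∑ _v ∈ s, (k - 1) := by rw [Finset.sum_const, hs, smul_eq_mul]
      _ ≤ ∑ v ∈ s, A.degree v := Finset.sum_le_sum hdeg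
  have hsle : ∑ v ∈ s, A.degree v ≤ ∑ v, A.degree v :=
    Finset.sum_le_sum_of_subset (Finset.subset_univ s)
  have hsum_eq : ∑ v ∈ s, A.degree v = k * (k - 1) := by omega
  have htot : ∑ v, A.degree v = k * (k - 1) := by omega
  have hEcard : A.edgeSet.ncard = k * (k - 1) / 2 := by omega
  -- degrees outside s are zero
  have hzero : ∀ u, u ∉ s → A.degree u = 0 := by
    intro u hu
    by_contra h
    have h1 : 1 ≤ A.degree u := Nat.one_le_iff_ne_zero.mpr h
    have : ∑ v ∈ insert u s, A.degree v ≤ ∑ v, A.degree v :=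
      Finset.sum_le_sum_of_subset (Finset.subset_univ _)
    rw [Finset.sum_insert hu, hsum_eq, htot] at this
    omega
  -- degrees in s are exactly k - 1
  have hdeg_eq : ∀ v ∈ s, A.degree v = k - 1 := by
    intro v hv
    by_contra h
    have hlt : k - 1 < A.degree v := lt_of_le_of_ne (hdeg v hv) (Ne.symm h)
    have : ∑ _v ∈ s, (k - 1) < ∑ v ∈ s, A.degree v :=
      Finset.sum_lt_sum hdeg ⟨v, hv, hlt⟩
    rw [Finset.sum_const, hs, smul_eq_mul, hsum_eq] at this
    omega
  refine ⟨hEcard, fun v w => ?_⟩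
  have mem_of_adj : ∀ {x y : V}, A.Adj x y → x ∈ s := by
    intro x y hxy
    by_contra hx
    have h0 := hzero x hx
    rw [← SimpleGraph.card_neighborFinset_eq_degree, Finset.card_eq_zero] at h0
    have : y ∈ A.neighborFinset x := (SimpleGraph.mem_neighborFinset A x y).mpr hxy
    rw [h0] at this
    exact absurd this (Finset.notMem_empty y)
  constructor
  · intro hvw
    exact ⟨mem_of_adj hvw, mem_of_adj hvw.symm, hvw.ne⟩
  · rintro ⟨hv, hw, hne⟩
    have hsub : A.neighborFinset v ⊆ s.erase v := by
      intro x hx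
      have hadj := (SimpleGraph.mem_neighborFinset A v x).mp hx
      exact Finset.mem_erase.mpr ⟨fun hxv => by subst hxv; exact hadj.ne rfl,
        mem_of_adj hadj.symm⟩
    have hcard : (s.erase v).card ≤ (A.neighborFinset v).card := by
      rw [Finset.card_erase_of_mem hv, hs, SimpleGraph.card_neighborFinset_eq_degree,
        hdeg_eq v hv]
    have heq : A.neighborFinset v = s.erase v :=
      Finset.eq_of_subset_of_card_le hsub hcard
    have : w ∈ A.neighborFinset v := by
      rw [heq]; exact Finset.mem_erase.mpr ⟨hne.symm, hw⟩
    exact (SimpleGraph.mem_neighborFinset A v w).mp this
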